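/- Let H and K be real Hilbert spaces and let S be a closed densely defined unbounded operator from H to K. Let f : ℝ → H be continuous and let Φ : ℝ → H be twice continuously differentiable such that for every t: Φ(t) ∈ D(S) and Φ'(t) ∈ D(S), the map t ↦ S(Φ(t)) is differentiable with derivative S(Φ'(t)), and for all ψ ∈ D(S): ⟨Φ''(t), ψ⟩_H + ⟨S(Φ(t)), Sψ⟩_K = ⟨f(t), ψ⟩_H. Then the energy E(t) := (1/2)‖Φ'(t)‖_H² + (1/2)‖S(Φ(t))‖_K² satisfies, for all t ≥ 0: E(t) − E(0) = ∫₀ᵗ ⟨f(s), Φ'(s)⟩_H ds. -/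

import Mathlib

open scoped LinearPMap RealInnerProductSpace

/-- **Energy identity** (identity (eq:P:Energy) of the paper, for strong solutions).
Let `S` be a closed densely defined unbounded operator from a real Hilbert space `H` to a real
Hilbert space `K`, `f : ℝ → H` continuous, and `Φ : ℝ → H` a twice continuously differentiable
curve with `Φ(t), Φ'(t) ∈ D(S)`, such that `t ↦ S(Φ(t))` is differentiable with derivative
`S(Φ'(t))` and `⟨Φ''(t), ψ⟩ + ⟨S Φ(t), S ψ⟩ = ⟨f(t), ψ⟩` for all `ψ ∈ D(S)`.  Then the energy
`E(t) = ½‖Φ'(t)‖² + ½‖S Φ(t)‖²` satisfies `E(t) - E(0) = ∫₀ᵗ ⟨f(s), Φ'(s)⟩ ds` for `t ≥ 0`. -/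
theorem abstract_wave_energy_identity
    {H K : Type*}
    [NormedAddCommGroup H] [InnerProductSpace ℝ H] [CompleteSpace H]
    [NormedAddCommGroup K] [InnerProductSpace ℝ K] [CompleteSpace K]
    (S : H →ₗ.[ℝ] K)
    (hSdense : Dense (S.domain : Set H))
    (hSclosed : S.IsClosed)
    (f : ℝ → H) (hf : Continuous f)
    (Φ : ℝ → H) (hΦ : ContDiff ℝ 2 Φ)
    (hmem : ∀ t, Φ t ∈ S.domain)
    (hmem' : ∀ t, deriv Φ t ∈ S.domain)
    (hSderiv : ∀ t, HasDerivAt (fun s => S ⟨Φ s, hmem s⟩) (S ⟨deriv Φ t, hmem' t⟩) t)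
    (heq : ∀ t, ∀ ψ : S.domain,
      ⟪deriv (deriv Φ) t, (ψ : H)⟫ + ⟪S ⟨Φ t, hmem t⟩, S ψ⟫ = ⟪f t, (ψ : H)⟫) :
    ∀ t : ℝ, 0 ≤ t →
      ((1 / 2) * ‖deriv Φ t‖ ^ 2 + (1 / 2) * ‖S ⟨Φ t, hmem t⟩‖ ^ 2) -
        ((1 / 2) * ‖deriv Φ 0‖ ^ 2 + (1 / 2) * ‖S ⟨Φ 0, hmem 0⟩‖ ^ 2) =
      ∫ s in (0 : ℝ)..t, ⟪f s, deriv Φ s⟫ := by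
  intro t ht
  have h2 : ContDiff ℝ ((1 : ℕ) + 1) Φ := by exact_mod_cast hΦ
  have hΦ1 : ContDiff ℝ 1 (deriv Φ) := by
    have := (contDiff_succ_iff_deriv.mp h2).2.2
    exact_mod_cast this
  have hd2 : Differentiable ℝ (deriv Φ) := (contDiff_one_iff_deriv.mp hΦ1).1
  have key : ∀ s : ℝ, HasDerivAt
      (fun u => (1 / 2) * ‖deriv Φ u‖ ^ 2 + (1 / 2) * ‖S ⟨Φ u, hmem u⟩‖ ^ 2)
      (⟪f s, deriv Φ s⟫) s := by
    intro s
    have h1 : HasDerivAt (deriv Φ) (deriv (deriv Φ) s) s := (hd2 s).hasDerivAt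
    have hg := hSderiv s
    have hi1 := (h1.inner ℝ h1).const_mul ((1 : ℝ) / 2)
    have hi2 := (hg.inner ℝ hg).const_mul ((1 : ℝ) / 2)
    have hsum := hi1.add hi2
    have hval : (1 / 2) * (⟪deriv Φ s, deriv (deriv Φ) s⟫ + ⟪deriv (deriv Φ) s, deriv Φ s⟫)
        + (1 / 2) * (⟪S ⟨Φ s, hmem s⟩, S ⟨deriv Φ s, hmem' s⟩⟫
          + ⟪S ⟨deriv Φ s, hmem' s⟩, S ⟨Φ s, hmem s⟩⟫) = ⟪f s, deriv Φ s⟫ := by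
      have hsymm1 : ⟪deriv Φ s, deriv (deriv Φ) s⟫ = ⟪deriv (deriv Φ) s, deriv Φ s⟫ :=
        real_inner_comm _ _
      have hsymm2 : ⟪S ⟨deriv Φ s, hmem' s⟩, S ⟨Φ s, hmem s⟩⟫
          = ⟪S ⟨Φ s, hmem s⟩, S ⟨deriv Φ s, hmem' s⟩⟫ := real_inner_comm _ _
      rw [hsymm1, hsymm2]
      have := heq s ⟨deriv Φ s, hmem' s⟩
      ring_nf
      ring_nf at this
      linarith
    have := hval ▸ hsum
    simp only [real_inner_self_eq_norm_sq] at this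
    exact this
  have hcont : Continuous fun s => ⟪f s, deriv Φ s⟫ := hf.inner hΦ1.continuous
  exact (intervalIntegral.integral_eq_sub_of_hasDerivAt (fun s _ => key s)
    (hcont.intervalIntegrable 0 t)).symm
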